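/- Let G_L, G_R be real numbers and H_L, H_R be strictly positive real numbers. Then the unregularized gain G_L^2/H_L + G_R^2/H_R - (G_L+G_R)^2/(H_L+H_R) equals zero if and only if G_L * H_R = G_R * H_L (equivalently, G_L/H_L = G_R/H_R); in particular, whenever G_L/H_L ≠ G_R/H_R the gain is strictly positive. -/
import Mathlib

lemma gain_key (G_L G_R H_L H_R : ℝ) (hHL : 0 < H_L) (hHR : 0 < H_R) :
    G_L ^ 2 / H_L + G_R ^ 2 / H_R - (G_L + G_R) ^ 2 / (H_L + H_R)
      = (G_L * H_R - G_R * H_L) ^ 2 / (H_L * H_R * (H_L + H_R)) := by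
  have h1 : H_L ≠ 0 := hHL.ne'
  have h2 : H_R ≠ 0 := hHR.ne'
  have h3 : H_L + H_R ≠ 0 := (by linarith : (0:ℝ) < H_L + H_R).ne'
  field_simp
  ring

/-- The unregularized gain `G_L^2/H_L + G_R^2/H_R - (G_L+G_R)^2/(H_L+H_R)` is zero iff
`G_L * H_R = G_R * H_L` (equivalently `G_L/H_L = G_R/H_R`); in particular, whenever
`G_L/H_L ≠ G_R/H_R` the gain is strictly positive. -/
theorem gain_eq_zero_iff_and_pos_of_ne (G_L G_R H_L H_R : ℝ) (hHL : 0 < H_L) (hHR : 0 < H_R) :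
    (G_L ^ 2 / H_L + G_R ^ 2 / H_R - (G_L + G_R) ^ 2 / (H_L + H_R) = 0 ↔ G_L * H_R = G_R * H_L)
      ∧ (G_L / H_L ≠ G_R / H_R →
          0 < G_L ^ 2 / H_L + G_R ^ 2 / H_R - (G_L + G_R) ^ 2 / (H_L + H_R)) := by
  have hden : 0 < H_L * H_R * (H_L + H_R) := by positivity
  rw [gain_key G_L G_R H_L H_R hHL hHR]
  constructor
  · rw [div_eq_zero_iff]
    constructor
    · rintro (h | h)
      · have := pow_eq_zero_iff (n := 2) (by norm_num) |>.mp h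
        linarith
      · exact absurd h hden.ne'
    · intro h
      left
      rw [sub_eq_zero.mpr h]
      ring
  · intro hne
    have h : G_L * H_R - G_R * H_L ≠ 0 := by
      intro h
      apply hne
      field_simp
      linarith [sub_eq_zero.mp h]
    positivity
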